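/- For every integer n ≥ 1, the following identity holds in ℚ[x]: B_n^F(x) + F_n·x^{n−1} = x^n + ∑_{j=2}^{n} [n choose j]_F · b_j^F · x^{n−j}. -/

import Mathlib

def fibFact (n : ℕ) : ℕ := ∏ i ∈ Finset.range n, Nat.fib (i + 1)

def fibonomial (n k : ℕ) : ℚ := (fibFact n : ℚ) / ((fibFact k : ℚ) * (fibFact (n - k) : ℚ))

lemma fibFact_pos (n : ℕ) : 0 < fibFact n :=
  Finset.prod_pos fun i _ => Nat.fib_pos.mpr (Nat.succ_pos i)

lemma fibFact_ne_zero (n : ℕ) : (fibFact n : ℚ) ≠ 0 := by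
  exact_mod_cast (fibFact_pos n).ne'

lemma fibFact_zero : fibFact 0 = 1 := rfl
lemma fibFact_one : fibFact 1 = 1 := by decide
lemma fibFact_two : fibFact 2 = 1 := by decide

lemma fibFact_succ (n : ℕ) : fibFact (n + 1) = fibFact n * Nat.fib (n + 1) :=
  Finset.prod_range_succ _ _

/-- For every `n ≥ 1`,
`B_n^F(x) + F_n * x^{n-1} = x^n + ∑_{j=2}^{n} [n choose j]_F * b_j^F * x^{n-j}` in `ℚ[x]`,
where `b_j^F = B_j^F(0)`. Here `B` is the (unique) sequence of Bernoulli–Fibonacci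
polynomials, characterized by the generating-function identity
`(∑ B_n(x) z^n/F_n!) * (∑_{n≥1} z^n/F_n!) = z * ∑ x^n z^n/F_n!` in `(ℚ[x])⟦z⟧`. -/
theorem bernoulliFib_H_expansion'
    (B : ℕ → Polynomial ℚ)
    (hB : (PowerSeries.mk fun n => Polynomial.C ((fibFact n : ℚ)⁻¹) * B n) *
          (PowerSeries.mk fun n =>
            if n = 0 then 0 else Polynomial.C ((fibFact n : ℚ)⁻¹)) =
          PowerSeries.X *
          PowerSeries.mk (fun n => Polynomial.C ((fibFact n : ℚ)⁻¹) * Polynomial.X ^ n))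
    (n : ℕ) (hn : 1 ≤ n) :
    B n + Polynomial.C ((Nat.fib n : ℚ)) * Polynomial.X ^ (n - 1) =
      Polynomial.X ^ n + ∑ j ∈ Finset.Icc 2 n,
        Polynomial.C (fibonomial n j * (B j).eval 0) * Polynomial.X ^ (n - j) := by
  classical
  set b : ℕ → ℚ := fun j => (B j).eval 0 with hbdef
  set S : PowerSeries (Polynomial ℚ) :=
    PowerSeries.mk fun n => if n = 0 then 0 else Polynomial.C ((fibFact n : ℚ)⁻¹) with hSdef
  set Eser : PowerSeries (Polynomial ℚ) :=
    PowerSeries.mk fun n => Polynomial.C ((fibFact n : ℚ)⁻¹) * Polynomial.X ^ n with hEdef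
  set Bser : PowerSeries (Polynomial ℚ) :=
    PowerSeries.mk fun n => Polynomial.C ((fibFact n : ℚ)⁻¹ * b n) with hBserdef
  set φ : Polynomial ℚ →+* Polynomial ℚ :=
    Polynomial.C.comp (Polynomial.evalRingHom 0) with hφdef
  -- Step 1: evaluate hB at x = 0 to get Bser * S = X
  have h2 : Bser * S = PowerSeries.X := by
    have h := congrArg (fun s => PowerSeries.map φ s) hB
    simp only [map_mul, PowerSeries.map_X] at h
    have e1 : PowerSeries.map φ
        (PowerSeries.mk fun n => Polynomial.C ((fibFact n : ℚ)⁻¹) * B n) = Bser := by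
      ext m
      simp [PowerSeries.coeff_map, hφdef, hBserdef, hbdef]
    have e2 : PowerSeries.map φ S = S := by
      ext m
      by_cases hm : m = 0 <;> simp [PowerSeries.coeff_map, hφdef, hSdef, hm]
    have e3 : PowerSeries.map φ Eser = 1 := by
      ext m
      by_cases hm : m = 0 <;>
        simp [PowerSeries.coeff_map, hφdef, hEdef, hm, fibFact_zero, zero_pow,
          PowerSeries.coeff_one]
    rw [e1, e2, e3, mul_one] at h
    exact h
  have hSne : S ≠ 0 := by
    intro h
    have := congrArg (PowerSeries.coeff (R := Polynomial ℚ) 1) h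
    simp [hSdef, fibFact_one] at this
  -- Step 2: cancel S to get the main factorization
  have h3 : (PowerSeries.mk fun n => Polynomial.C ((fibFact n : ℚ)⁻¹) * B n)
      = Bser * Eser := by
    apply mul_right_cancel₀ hSne
    rw [hB]
    calc PowerSeries.X * Eser = Bser * S * Eser := by rw [h2]
      _ = Bser * Eser * S := by ring
  -- Step 3: compute b 0 = 1 and b 1 = -1 from coefficients of h2
  have hb0 : b 0 = 1 := by
    have h := congrArg (PowerSeries.coeff (R := Polynomial ℚ) 1) h2
    rw [PowerSeries.coeff_mul] at h
    rw [Finset.Nat.sum_antidiagonal_eq_sum_range_succ_mk] at h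
    simp only [hBserdef, hSdef, PowerSeries.coeff_mk, Finset.sum_range_succ,
      Finset.sum_range_zero, PowerSeries.coeff_one_X] at h
    norm_num [fibFact_zero, fibFact_one] at h
    exact_mod_cast Polynomial.C_inj.mp (h.trans Polynomial.C_1.symm)
  have hb1 : b 1 = -1 := by
    have h := congrArg (PowerSeries.coeff (R := Polynomial ℚ) 2) h2
    rw [PowerSeries.coeff_mul] at h
    rw [Finset.Nat.sum_antidiagonal_eq_sum_range_succ_mk] at h
    simp only [hBserdef, hSdef, PowerSeries.coeff_mk, Finset.sum_range_succ,
      Finset.sum_range_zero, PowerSeries.coeff_X] at h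
    norm_num [fibFact_zero, fibFact_one, fibFact_two] at h
    rw [← Polynomial.C_add, ← Polynomial.C_0, Polynomial.C_inj] at h
    linarith
  -- Step 4: extract coefficient n of h3
  have hBn : B n = ∑ j ∈ Finset.range (n + 1),
      Polynomial.C (fibonomial n j * b j) * Polynomial.X ^ (n - j) := by
    have h := congrArg (PowerSeries.coeff (R := Polynomial ℚ) n) h3
    simp only [PowerSeries.coeff_mul, Finset.Nat.sum_antidiagonal_eq_sum_range_succ_mk,
      PowerSeries.coeff_mk, hBserdef, hEdef] at h
    have h' := congrArg (fun p => Polynomial.C ((fibFact n : ℚ)) * p) h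
    simp only [Finset.mul_sum, ← mul_assoc, ← Polynomial.C_mul] at h'
    rw [mul_inv_cancel₀ (fibFact_ne_zero n), Polynomial.C_1, one_mul] at h'
    rw [h']
    apply Finset.sum_congr rfl
    intro j hj
    congr 1
    rw [fibonomial, div_eq_mul_inv, mul_inv]
    ring
  -- Step 5: split the sum
  have hset : Finset.range (n + 1) = insert 0 (insert 1 (Finset.Icc 2 n)) := by
    ext x
    simp only [Finset.mem_range, Finset.mem_insert, Finset.mem_Icc]
    omega
  rw [hBn, hset, Finset.sum_insert (by simp), Finset.sum_insert (by simp)]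
  have hf0 : fibonomial n 0 = 1 := by
    rw [fibonomial, fibFact_zero]
    simp [div_self (fibFact_ne_zero n)]
  have hf1 : fibonomial n 1 = (Nat.fib n : ℚ) := by
    rw [fibonomial, fibFact_one]
    obtain ⟨m, rfl⟩ := Nat.exists_eq_add_of_le hn
    simp only [Nat.add_sub_cancel_left]
    rw [Nat.add_comm 1 m, fibFact_succ]
    push_cast
    rw [one_mul, mul_comm, mul_div_assoc, div_self (fibFact_ne_zero m), mul_one]
  rw [hf0, hf1, hb0, hb1]
  simp only [Nat.sub_zero, mul_one, map_one, one_mul, mul_neg_one, map_neg]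
  ring
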